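/- There exists an almost disjoint family (A_{n,α}) indexed by n ∈ ω and α ∈ 𝔠 (the continuum) of infinite subsets of ω such that for every family (A'_{n,α}) where each A'_{n,α} is a cofinite subset of A_{n,α}, we have sup_{p ∈ ω} |{n ∈ ω : p ∈ ⋃_{α ∈ 𝔠} A'_{n,α}}| = +∞. -/

import Mathlib

open Cardinal

namespace S0

noncomputable section

def enc : List ℕ → ℕ := Encodable.encode

lemma enc_inj : Function.Injective enc := Encodable.encode_injective

def seg (x : ℕ → ℕ) : ℕ → List ℕ
  | 0 => []
  | m + 1 => seg x m ++ [x m]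

lemma seg_length (x : ℕ → ℕ) (m : ℕ) : (seg x m).length = m := by
  induction m with
  | zero => rfl
  | succ m ih => simp [seg, ih]

lemma seg_inj (x : ℕ → ℕ) : Function.Injective (seg x) := fun a b h => by
  have := congrArg List.length h
  simpa [seg_length] using this

lemma seg_agree {x y : ℕ → ℕ} {t : ℕ} (h : seg x t = seg y t) :
    ∀ j < t, x j = y j := by
  induction t with
  | zero => intro j hj; omega
  | succ t ih =>
    simp only [seg] at h
    have h1 : seg x t = seg y t := by
      have := congrArg (fun l => List.take t l) h
      simpa [List.take_append_of_le_length, seg_length] using this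
    have h2 : x t = y t := by
      have := congrArg (fun l => l.getLast?) h
      simpa using this
    intro j hj
    rcases Nat.lt_succ_iff_lt_or_eq.mp hj with h' | h'
    · exact ih h1 j h'
    · subst h'; exact h2

def setA (x : ℕ → ℕ) (n : ℕ) : Set ℕ := {p | ∃ m, x m = n ∧ p = enc (seg x m)}

lemma setA_infinite {x : ℕ → ℕ} (hx : ∀ n, {m | x m = n}.Infinite) (n : ℕ) :
    (setA x n).Infinite := by
  have h : setA x n = (fun m => enc (seg x m)) '' {m | x m = n} := by
    ext p
    simp only [setA, Set.mem_image, Set.mem_setOf_eq]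
    constructor
    · rintro ⟨m, hm, rfl⟩; exact ⟨m, hm, rfl⟩
    · rintro ⟨m, hm, rfl⟩; exact ⟨m, hm, rfl⟩
  rw [h]
  exact (hx n).image (fun a _ b _ hab => seg_inj x (enc_inj hab))

lemma setA_disj {x : ℕ → ℕ} {n m : ℕ} (h : n ≠ m) :
    (setA x n ∩ setA x m) = ∅ := by
  ext p
  simp only [Set.mem_inter_iff, setA, Set.mem_setOf_eq, Set.mem_empty_iff_false, iff_false,
    not_and]
  rintro ⟨a, ha, rfl⟩ ⟨b, hb, hp⟩
  have hab : a = b := seg_inj x (enc_inj hp)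
  subst hab
  exact h (ha.symm.trans hb)

lemma setA_ad {x y : ℕ → ℕ} (hxy : x ≠ y) (n m : ℕ) :
    (setA x n ∩ setA y m).Finite := by
  classical
  have hne : ∃ t, x t ≠ y t := by
    by_contra h; push_neg at h; exact hxy (funext h)
  have hsub : setA x n ∩ setA y m ⊆ (fun t => enc (seg x t)) '' Set.Iic (Nat.find hne) := by
    rintro p ⟨⟨a, _, rfl⟩, ⟨b, _, hp⟩⟩
    have hab : seg x a = seg y b := enc_inj hp
    have hlen : a = b := by
      have := congrArg List.length hab
      simpa [seg_length] using this
    subst hlen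
    refine ⟨a, ?_, rfl⟩
    by_contra hgt
    simp only [Set.mem_Iic, not_le] at hgt
    exact Nat.find_spec hne (seg_agree hab (Nat.find hne) hgt)
  exact ((Set.finite_Iic _).image _).subset hsub

def X : Set (ℕ → ℕ) := {x | ∀ n, {m | x m = n}.Infinite}

def itl (y : ℕ → ℕ) (m : ℕ) : ℕ := if m % 2 = 1 then (m / 2).unpair.1 else y (m / 2)

lemma odd_trick (n j : ℕ) (f : ℕ → ℕ)
    (hf : ∀ m, m % 2 = 1 → f m = (m / 2).unpair.1) :
    f (2 * Nat.pair n j + 1) = n := by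
  have h1 : (2 * Nat.pair n j + 1) % 2 = 1 := by omega
  have h2 : (2 * Nat.pair n j + 1) / 2 = Nat.pair n j := by omega
  rw [hf _ h1, h2, Nat.unpair_pair]

lemma mem_X_of_odd (f : ℕ → ℕ) (hf : ∀ m, m % 2 = 1 → f m = (m / 2).unpair.1) :
    f ∈ X := by
  intro n
  apply Set.infinite_of_injective_forall_mem (f := fun j : ℕ => 2 * Nat.pair n j + 1)
    (hi := fun a b hab => by
      have hab' : 2 * Nat.pair n a + 1 = 2 * Nat.pair n b + 1 := hab
      have h1 : Nat.pair n a = Nat.pair n b := by omega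
      have h2 := congrArg Nat.unpair h1
      simpa [Nat.unpair_pair] using h2)
  intro j
  exact odd_trick n j f hf

lemma itl_mem (y : ℕ → ℕ) : itl y ∈ X := by
  apply mem_X_of_odd
  intro m hm
  simp [itl, hm]

lemma itl_inj : Function.Injective itl := by
  intro a b h
  funext t
  have := congrFun h (2 * t)
  have h2 : (2 * t) % 2 = 0 := by omega
  have h3 : (2 * t) / 2 = t := by omega
  simpa [itl, h2, h3] using this

lemma mk_fun_nat : #(ℕ → ℕ) = Cardinal.continuum := by
  rw [← Cardinal.power_def, Cardinal.mk_nat, Cardinal.aleph0_power_aleph0]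

lemma mk_X : #X = Cardinal.continuum := by
  apply le_antisymm
  · exact le_trans (Cardinal.mk_subtype_le _) mk_fun_nat.le
  · refine le_trans mk_fun_nat.ge (Cardinal.mk_le_of_injective
      (f := fun y => (⟨itl y, itl_mem y⟩ : X)) ?_)
    exact fun a b hab => itl_inj (congrArg Subtype.val hab)

def L (ii : List ℕ → ℕ) : ℕ → List ℕ
  | 0 => []
  | m + 1 => L ii m ++ [if m % 2 = 1 then (m / 2).unpair.1 else ii (L ii m)]

def xd (ii : List ℕ → ℕ) (m : ℕ) : ℕ :=
  if m % 2 = 1 then (m / 2).unpair.1 else ii (L ii m)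

lemma seg_xd (ii : List ℕ → ℕ) (m : ℕ) : seg (xd ii) m = L ii m := by
  induction m with
  | zero => rfl
  | succ m ih => simp [seg, L, xd, ih]

lemma xd_mem (ii : List ℕ → ℕ) : xd ii ∈ X := by
  apply mem_X_of_odd
  intro m hm
  simp [xd, hm]

lemma xd_even (ii : List ℕ → ℕ) (t : ℕ) : xd ii (2 * t) = ii (L ii (2 * t)) := by
  have h2 : (2 * t) % 2 = 0 := by omega
  simp [xd, h2]

lemma pigeon {k : ℕ} (v : ℕ → ℕ) (hv : ∀ t, v t < k) :
    ∃ i < k, {t | v t = i}.Infinite := by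
  by_contra h
  push_neg at h
  have hsub : (Set.univ : Set ℕ) ⊆ ⋃ i ∈ Finset.range k, {t | v t = i} := by
    intro t _
    simp only [Set.mem_iUnion, Finset.mem_range, Set.mem_setOf_eq]
    exact ⟨v t, hv t, rfl⟩
  have hfin : ((⋃ i ∈ Finset.range k, {t | v t = i}) : Set ℕ).Finite := by
    apply Set.Finite.biUnion (Finset.range k).finite_toSet
    intro i hi
    exact h i (Finset.mem_range.mp hi)
  exact Set.infinite_univ (hfin.subset hsub)

end

end S0

/-- There exists an almost disjoint family `(A_{n,α})_{n ∈ ω, α ∈ 𝔠}` of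
infinite subsets of `ω` such that for every family `(A'_{n,α})` with each `A'_{n,α}` a
cofinite subset of `A_{n,α}`, we have `sup_p |{n : p ∈ ⋃_α A'_{n,α}}| = +∞`. -/
theorem statement0 (ι : Type) (hι : #ι = Cardinal.continuum) :
    ∃ A : ℕ → ι → Set ℕ,
      (∀ n α, (A n α).Infinite) ∧
      (∀ n α m β, (n, α) ≠ (m, β) → (A n α ∩ A m β).Finite) ∧
      ∀ A' : ℕ → ι → Set ℕ,
        (∀ n α, A' n α ⊆ A n α ∧ (A n α \ A' n α).Finite) →
        ∀ k : ℕ, ∃ p : ℕ, (k : ℕ∞) ≤ {n : ℕ | p ∈ ⋃ α : ι, A' n α}.encard := by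
  classical
  obtain ⟨g⟩ : Nonempty (ι ≃ S0.X) := Cardinal.eq.mp (by rw [hι, S0.mk_X])
  refine ⟨fun n α => S0.setA (g α).1 n, ?_, ?_, ?_⟩
  · intro n α
    exact S0.setA_infinite (g α).2 n
  · intro n α m β hne
    by_cases hab : α = β
    · subst hab
      have hnm : n ≠ m := fun h => hne (by rw [h])
      rw [S0.setA_disj hnm]
      exact Set.finite_empty
    · have hxy : (g α).1 ≠ (g β).1 := fun h => hab (g.injective (Subtype.ext h))
      exact S0.setA_ad hxy n m
  · intro A' hA' k
    rcases Nat.eq_zero_or_pos k with hk | hk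
    · subst hk
      exact ⟨0, by simp⟩
    by_contra hcon
    push_neg at hcon
    have spec : ∀ s : List ℕ, ∃ i, i < k ∧ ∀ α, S0.enc s ∉ A' i α := by
      intro s
      by_contra hs
      push_neg at hs
      have hsub : (Finset.range k : Set ℕ) ⊆ {n : ℕ | S0.enc s ∈ ⋃ α : ι, A' n α} := by
        intro i hi
        simp only [Finset.coe_range, Set.mem_Iio] at hi
        obtain ⟨α, hα⟩ := hs i hi
        exact Set.mem_iUnion.mpr ⟨α, hα⟩
      have hle : (k : ℕ∞) ≤ {n : ℕ | S0.enc s ∈ ⋃ α : ι, A' n α}.encard := by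
        calc (k : ℕ∞) = ((Finset.range k : Finset ℕ) : Set ℕ).encard := by
              rw [Set.encard_coe_eq_coe_finsetCard, Finset.card_range]
          _ ≤ _ := Set.encard_mono hsub
      exact absurd hle (not_le.mpr (hcon (S0.enc s)))
    choose ii hiik hii using spec
    set x := S0.xd ii with hxdef
    have hx : x ∈ S0.X := S0.xd_mem ii
    set α₀ := g.symm ⟨x, hx⟩ with hα₀
    have hgα₀ : (g α₀).1 = x := by rw [hα₀, Equiv.apply_symm_apply]
    obtain ⟨i, hik, hI⟩ := S0.pigeon (k := k) (fun t => x (2 * t)) (fun t => by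
      show x (2 * t) < k
      rw [hxdef, S0.xd_even]
      exact hiik _)
    have hsubF : (fun t => S0.enc (S0.seg x (2 * t))) '' {t | x (2 * t) = i}
        ⊆ S0.setA x i \ A' i α₀ := by
      rintro p ⟨t, ht, rfl⟩
      refine ⟨⟨2 * t, ht, rfl⟩, ?_⟩
      have hxt : x (2 * t) = ii (S0.L ii (2 * t)) := S0.xd_even ii t
      have hieq : i = ii (S0.seg x (2 * t)) := by
        rw [hxdef, S0.seg_xd, ← hxt, ht]
      rw [hieq]
      exact hii _ α₀
    have hfin : (S0.setA x i \ A' i α₀).Finite := by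
      have h2 := (hA' i α₀).2
      simpa [hgα₀] using h2
    have hinf : ((fun t => S0.enc (S0.seg x (2 * t))) '' {t | x (2 * t) = i}).Infinite :=
      hI.image (fun a _ b _ hab => by
        have := S0.seg_inj x (S0.enc_inj hab)
        omega)
    exact hinf (hfin.subset hsubF)
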